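/- The charge conjugation form A on the spin representation Δ = Λ*(ℂ^m) of Spin(2m), defined by A(η,θ) = ⟨A(η̄), θ⟩ where A = Γ₁Γ₂⋯Γ_m, satisfies A(η,θ) = (-1)^{m(m-1)/2} A(θ,η); in particular A is symmetric for m ≡ 0,1 (mod 4) and skew-symmetric for m ≡ 2,3 (mod 4). -/

import Mathlib

/-!  STATEMENT 0.  The charge conjugation form `A(η,θ) = ⟨A(η̄), θ⟩`, with
`A = Γ₁ ⋯ Γ_m`, on the spin representation `Δ` of `Spin(2m)` satisfies
`A(η,θ) = (-1)^{m(m-1)/2} A(θ,η)`; in particular it is symmetric for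
`m ≡ 0, 1 (mod 4)` and skew-symmetric for `m ≡ 2, 3 (mod 4)`. -/

private lemma adj_list {Δ : Type} [AddCommGroup Δ] [Module ℂ Δ]
    (inn : Δ →ₗ⋆[ℂ] Δ →ₗ[ℂ] ℂ) :
    ∀ (l : List (Module.End ℂ Δ)),
      (∀ a ∈ l, ∀ x y, inn (a x) y = inn x (a y)) →
      ∀ x y, inn (l.prod x) y = inn x (l.reverse.prod y) := by
  intro l
  induction l with
  | nil => intro _ x y; simp
  | cons a l ih =>
    intro h x y
    have ha := h a List.mem_cons_self
    have hl : ∀ b ∈ l, ∀ x y, inn (b x) y = inn x (b y) :=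
      fun b hb => h b (List.mem_cons_of_mem _ hb)
    simp only [List.prod_cons, List.reverse_cons, List.prod_append,
      List.prod_singleton, List.prod_nil, Module.End.mul_apply, Module.End.one_apply]
    rw [ha, ih hl]

private lemma conj_list {Δ : Type} [AddCommGroup Δ] [Module ℂ Δ]
    (conj : Δ →ₗ⋆[ℂ] Δ) :
    ∀ (l : List (Module.End ℂ Δ)),
      (∀ a ∈ l, ∀ x, conj (a x) = a (conj x)) →
      ∀ x, conj (l.prod x) = l.prod (conj x) := by
  intro l
  induction l with
  | nil => intro _ x; simp
  | cons a l ih =>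
    intro h x
    have ha := h a List.mem_cons_self
    have hl : ∀ b ∈ l, ∀ x, conj (b x) = b (conj x) :=
      fun b hb => h b (List.mem_cons_of_mem _ hb)
    simp only [List.prod_cons, Module.End.mul_apply]
    rw [ha, ih hl]

private lemma move_through {Δ : Type} [AddCommGroup Δ] [Module ℂ Δ]
    (a : Module.End ℂ Δ) :
    ∀ (l : List (Module.End ℂ Δ)),
      (∀ b ∈ l, b * a = -(a * b)) →
      l.prod * a = ((-1 : ℂ) ^ l.length) • (a * l.prod) := by
  intro l
  induction l with
  | nil => intro _; simp
  | cons b l ih =>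
    intro h
    have hb := h b List.mem_cons_self
    have hl : ∀ c ∈ l, c * a = -(a * c) := fun c hc => h c (List.mem_cons_of_mem _ hc)
    calc (b :: l).prod * a = b * (l.prod * a) := by rw [List.prod_cons, mul_assoc]
    _ = b * (((-1:ℂ)^l.length) • (a * l.prod)) := by rw [ih hl]
    _ = ((-1:ℂ)^l.length) • (b * a * l.prod) := by rw [mul_smul_comm, mul_assoc]
    _ = ((-1:ℂ)^l.length) • (-(a*b) * l.prod) := by rw [hb]
    _ = ((-1:ℂ)^(b::l).length) • (a * (b::l).prod) := by
        rw [List.prod_cons, List.length_cons, neg_mul, smul_neg, pow_succ,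
          mul_neg_one, neg_smul, ← mul_assoc]

private lemma rev_prod {Δ : Type} [AddCommGroup Δ] [Module ℂ Δ] :
    ∀ (m : ℕ) (f : Fin m → Module.End ℂ Δ),
      (∀ i j, i ≠ j → f i * f j = -(f j * f i)) →
      (List.ofFn f).reverse.prod = ((-1:ℂ) ^ Nat.choose m 2) • (List.ofFn f).prod := by
  intro m
  induction m with
  | zero => intro f _; simp
  | succ n ih =>
    intro f h
    have hsub : ∀ i j : Fin n, i ≠ j → f i.succ * f j.succ = -(f j.succ * f i.succ) :=
      fun i j hij => h _ _ (fun e => hij (Fin.succ_injective n e))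
    have hmv : ∀ b ∈ List.ofFn (fun i : Fin n => f i.succ), b * f 0 = -(f 0 * b) := by
      intro b hb
      rw [List.mem_ofFn] at hb
      obtain ⟨i, rfl⟩ := hb
      exact h _ _ (Fin.succ_ne_zero i)
    have hch : Nat.choose (n+1) 2 = Nat.choose n 2 + n := by
      rw [Nat.choose_succ_succ, Nat.choose_one_right, Nat.add_comm]
    rw [List.ofFn_succ, List.reverse_cons, List.prod_append, List.prod_singleton,
      List.prod_cons, ih (fun i => f i.succ) hsub, smul_mul_assoc,
      move_through (f 0) _ hmv, List.length_ofFn, smul_smul, ← pow_add, hch]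

/-- The product `Γ₁ ⋯ Γ_m` of the first `m` gamma matrices. -/
noncomputable def AOp {Δ : Type} [AddCommGroup Δ] [Module ℂ Δ] (m : ℕ)
    (Γ : Fin (2 * m) → Module.End ℂ Δ) : Module.End ℂ Δ :=
  (List.ofFn fun i : Fin m => Γ ⟨i.1, by have := i.2; omega⟩).prod

theorem spin_charge_conjugation_A_symmetry
    (m : ℕ) (hm : 0 < m)
    -- the spin representation Δ = Λ*(U ⊗ ℂ) of Spin(2m)
    (Δ : Type) [AddCommGroup Δ] [Module ℂ Δ]
    -- the Dirac (hermitian) inner product ⟨·,·⟩ on Δ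
    (inn : Δ →ₗ⋆[ℂ] Δ →ₗ[ℂ] ℂ)
    (hinn_conj_symm : ∀ η θ : Δ, inn η θ = (starRingEnd ℂ) (inn θ η))
    -- the standard complex conjugation of Λ*(V ⊗ ℂ) restricted to Δ
    (conj : Δ →ₗ⋆[ℂ] Δ)
    (hconj_invol : ∀ η : Δ, conj (conj η) = η)
    (hconj_inn : ∀ η θ : Δ, inn (conj η) (conj θ) = (starRingEnd ℂ) (inn η θ))
    -- the gamma matrices Γ_μ, μ = 1, …, 2m
    (Γ : Fin (2 * m) → Module.End ℂ Δ)
    -- Clifford algebra relations Γ_μ Γ_ν + Γ_ν Γ_μ = 2 δ_{μν}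
    (hcliff : ∀ μ ν : Fin (2 * m),
      Γ μ * Γ ν + Γ ν * Γ μ = if μ = ν then (2 : ℂ) • (1 : Module.End ℂ Δ) else 0)
    -- the gamma matrices are hermitian with respect to ⟨·,·⟩
    (hherm : ∀ (μ : Fin (2 * m)) (η θ : Δ), inn (Γ μ η) θ = inn η (Γ μ θ))
    -- Γ_μ for μ ≤ m is a real operator, while Γ_{m+j} = -i e_j∧ + i e_j⌟ is
    -- purely imaginary: conjugation (anti)commutes accordingly
    (hconjΓ : ∀ (μ : Fin (2 * m)) (η : Δ),
      conj (Γ μ η) = (if (μ : ℕ) < m then (1 : ℂ) else -1) • Γ μ (conj η)) :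
    -- the symmetry property of A(η,θ) = ⟨A(η̄), θ⟩, A = Γ₁⋯Γ_m :
    (∀ η θ : Δ,
      inn (AOp m Γ (conj η)) θ
        = (-1 : ℂ) ^ (m * (m - 1) / 2) * inn (AOp m Γ (conj θ)) η)
    -- in particular, A is symmetric for m ≡ 0, 1 (mod 4)
    ∧ ((m % 4 = 0 ∨ m % 4 = 1) →
        ∀ η θ : Δ, inn (AOp m Γ (conj η)) θ = inn (AOp m Γ (conj θ)) η)
    -- and skew-symmetric for m ≡ 2, 3 (mod 4)
    ∧ ((m % 4 = 2 ∨ m % 4 = 3) →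
        ∀ η θ : Δ, inn (AOp m Γ (conj η)) θ = - inn (AOp m Γ (conj θ)) η) := by
  set f : Fin m → Module.End ℂ Δ := fun i => Γ ⟨i.1, by have := i.2; omega⟩ with hf
  set L : List (Module.End ℂ Δ) := List.ofFn f with hL
  have hAOp : AOp m Γ = L.prod := rfl
  have hLherm : ∀ a ∈ L, ∀ x y, inn (a x) y = inn x (a y) := by
    intro a ha
    rw [hL, List.mem_ofFn] at ha
    obtain ⟨i, rfl⟩ := ha
    exact hherm _
  have hLconj : ∀ a ∈ L, ∀ x, conj (a x) = a (conj x) := by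
    intro a ha x
    rw [hL, List.mem_ofFn] at ha
    obtain ⟨i, rfl⟩ := ha
    rw [hconjΓ]
    simp [hf, i.2]
  have hanti : ∀ i j : Fin m, i ≠ j → f i * f j = -(f j * f i) := by
    intro i j hij
    have hne : (⟨i.1, by have := i.2; omega⟩ : Fin (2*m)) ≠ ⟨j.1, by have := j.2; omega⟩ := by
      intro e
      simp only [Fin.mk.injEq] at e
      exact hij (Fin.ext e)
    have hc := hcliff ⟨i.1, by have := i.2; omega⟩ ⟨j.1, by have := j.2; omega⟩
    rw [if_neg hne] at hc
    rw [hf]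
    linear_combination (norm := module) hc
  have hrev : L.reverse.prod = ((-1:ℂ) ^ Nat.choose m 2) • L.prod := rev_prod m f hanti
  have key : ∀ η θ : Δ,
      inn (AOp m Γ (conj η)) θ
        = (-1 : ℂ) ^ (m * (m - 1) / 2) * inn (AOp m Γ (conj θ)) η := by
    intro η θ
    have step2 : inn (conj η) (L.reverse.prod θ) = inn (conj (L.reverse.prod θ)) η := by
      have h1 : inn (conj (L.reverse.prod θ)) η
          = (starRingEnd ℂ) (inn (L.reverse.prod θ) (conj η)) := by
        conv_lhs => rw [← hconj_invol η]
        exact hconj_inn _ _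
      rw [h1, ← hinn_conj_symm]
    have step3 : conj (L.reverse.prod θ) = L.reverse.prod (conj θ) :=
      conj_list conj L.reverse (fun a ha => hLconj a (List.mem_reverse.mp ha)) θ
    rw [hAOp, adj_list inn L hLherm, step2, step3, hrev]
    simp only [LinearMap.smul_apply, map_smulₛₗ, LinearMap.smul_apply, smul_eq_mul,
      map_pow, map_neg, map_one, Nat.choose_two_right]
  refine ⟨key, ?_, ?_⟩
  · intro hr η θ
    have hpow : (-1:ℂ)^(m*(m-1)/2) = 1 := by
      rcases hr with h0 | h1
      · obtain ⟨j, hj⟩ : ∃ j, m = 4*j+4 := ⟨m/4 - 1, by omega⟩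
        have h2 : m - 1 = 4*j+3 := by omega
        have e : m*(m-1) = 2*(8*j^2+14*j+6) := by rw [h2, hj]; ring
        have q : m*(m-1)/2 = 8*j^2+14*j+6 := by omega
        rw [q]; exact Even.neg_one_pow ⟨4*j^2+7*j+3, by ring⟩
      · obtain ⟨j, hj⟩ : ∃ j, m = 4*j+1 := ⟨m/4, by omega⟩
        have h2 : m - 1 = 4*j := by omega
        have e : m*(m-1) = 2*(8*j^2+2*j) := by rw [h2, hj]; ring
        have q : m*(m-1)/2 = 8*j^2+2*j := by omega
        rw [q]; exact Even.neg_one_pow ⟨4*j^2+j, by ring⟩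
    rw [key η θ, hpow, one_mul]
  · intro hr η θ
    have hpow : (-1:ℂ)^(m*(m-1)/2) = -1 := by
      rcases hr with h2' | h3'
      · obtain ⟨j, hj⟩ : ∃ j, m = 4*j+2 := ⟨m/4, by omega⟩
        have h2 : m - 1 = 4*j+1 := by omega
        have e : m*(m-1) = 2*(8*j^2+6*j+1) := by rw [h2, hj]; ring
        have q : m*(m-1)/2 = 8*j^2+6*j+1 := by omega
        rw [q]; exact Odd.neg_one_pow ⟨4*j^2+3*j, by ring⟩
      · obtain ⟨j, hj⟩ : ∃ j, m = 4*j+3 := ⟨m/4, by omega⟩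
        have h2 : m - 1 = 4*j+2 := by omega
        have e : m*(m-1) = 2*(8*j^2+10*j+3) := by rw [h2, hj]; ring
        have q : m*(m-1)/2 = 8*j^2+10*j+3 := by omega
        rw [q]; exact Odd.neg_one_pow ⟨4*j^2+5*j+1, by ring⟩
    rw [key η θ, hpow, neg_one_mul]
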